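/- Every g-dimensional complex subspace E of ℂ^{2g} = ℂ^g × ℂ^g on which the Hermitian form q is positive definite is the graph of a unique g×g complex matrix W, i.e. there exists a unique W with E = {(v, Wv) : v ∈ ℂ^g}, and this W satisfies that I_g − Wᴴ·W is positive definite. -/

import Mathlib

open Matrix
open scoped ComplexOrder

/-- The Hermitian form of signature `(g,g)` on `ℂ^g × ℂ^g`:
`q(z,w) = ∑ conj(z₁ᵢ)·w₁ᵢ − ∑ conj(z₂ᵢ)·w₂ᵢ`. -/
noncomputable def qForm (g : ℕ) (z w : (Fin g → ℂ) × (Fin g → ℂ)) : ℂ :=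
  ∑ i, (starRingEnd ℂ) (z.1 i) * w.1 i - ∑ i, (starRingEnd ℂ) (z.2 i) * w.2 i

/-- The graph `E_W = {(v, W·v) : v ∈ ℂ^g}` of a `g×g` complex matrix `W`,
as a complex subspace of `ℂ^g × ℂ^g`. -/
noncomputable def graphSub (g : ℕ) (W : Matrix (Fin g) (Fin g) ℂ) :
    Submodule ℂ ((Fin g → ℂ) × (Fin g → ℂ)) :=
  LinearMap.range (LinearMap.prod LinearMap.id W.mulVecLin)

lemma mem_graphSub {g : ℕ} {W : Matrix (Fin g) (Fin g) ℂ}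
    {x : (Fin g → ℂ) × (Fin g → ℂ)} :
    x ∈ graphSub g W ↔ x.2 = W.mulVec x.1 := by
  constructor
  · rintro ⟨v, rfl⟩; rfl
  · intro h
    exact ⟨x.1, by ext <;> simp [h, Matrix.mulVecLin]⟩

lemma graphSub_inj {g : ℕ} {W W' : Matrix (Fin g) (Fin g) ℂ}
    (h : graphSub g W = graphSub g W') : W = W' := by
  have hv : ∀ v, W.mulVec v = W'.mulVec v := by
    intro v
    have : (v, W.mulVec v) ∈ graphSub g W' := by
      rw [← h, mem_graphSub]
    simpa [mem_graphSub] using this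
  have h2 : W.mulVecLin = W'.mulVecLin := by ext v; simp [hv]
  have h3 : Matrix.toLin' W = Matrix.toLin' W' := by
    rw [Matrix.toLin'_apply', Matrix.toLin'_apply', h2]
  exact Matrix.toLin'.injective h3

/-- Every `g`-dimensional subspace `E ⊆ ℂ^{2g}` on which `q` is positive definite is
the graph of a unique `g×g` matrix `W`, and this `W` satisfies `I_g − Wᴴ·W > 0`. -/
theorem positive_subspace_is_graph (g : ℕ) (hg : 1 ≤ g)
    (E : Submodule ℂ ((Fin g → ℂ) × (Fin g → ℂ)))
    (hdim : Module.finrank ℂ E = g)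
    (hpos : ∀ v : (Fin g → ℂ) × (Fin g → ℂ), v ∈ E → v ≠ 0 → 0 < (qForm g v v).re) :
    (∃! W : Matrix (Fin g) (Fin g) ℂ, graphSub g W = E) ∧
    (∀ W : Matrix (Fin g) (Fin g) ℂ, graphSub g W = E → (1 - Wᴴ * W).PosDef) := by
  -- the first-projection map on E
  set f : E →ₗ[ℂ] (Fin g → ℂ) := (LinearMap.fst ℂ _ _).comp E.subtype with hf
  have hinj : Function.Injective f := by
    rw [← LinearMap.ker_eq_bot]
    rw [Submodule.eq_bot_iff]
    rintro ⟨x, hxE⟩ hx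
    have hx1 : x.1 = 0 := hx
    by_contra hne
    have hxne : x ≠ 0 := fun h => hne (by simp [h])
    have := hpos x hxE hxne
    have hre : (qForm g x x).re ≤ 0 := by
      simp only [qForm, hx1, Pi.zero_apply, map_zero, zero_mul, Finset.sum_const_zero,
        zero_sub, Complex.neg_re, Complex.re_sum, neg_nonpos]
      apply Finset.sum_nonneg
      intro i _
      simpa [Complex.mul_re] using
        add_nonneg (mul_self_nonneg (x.2 i).re) (mul_self_nonneg (x.2 i).im)
    linarith
  have hdim' : Module.finrank ℂ E = Module.finrank ℂ (Fin g → ℂ) := by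
    simp [hdim]
  let e : E ≃ₗ[ℂ] (Fin g → ℂ) := f.linearEquivOfInjective hinj hdim'
  have he : ∀ x : E, e x = (x : (Fin g → ℂ) × (Fin g → ℂ)).1 := fun x =>
    f.linearEquivOfInjective_apply hinj hdim' x
  set s : E →ₗ[ℂ] (Fin g → ℂ) := (LinearMap.snd ℂ _ _).comp E.subtype with hs
  set T : (Fin g → ℂ) →ₗ[ℂ] (Fin g → ℂ) := s.comp (e.symm : (Fin g → ℂ) →ₗ[ℂ] E) with hT
  set W0 : Matrix (Fin g) (Fin g) ℂ := LinearMap.toMatrix' T with hW0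
  have hmv : ∀ v, W0.mulVec v = T v := by
    intro v
    have : Matrix.toLin' W0 = T := Matrix.toLin'_toMatrix' T
    rw [← this]; rfl
  have hgraph : graphSub g W0 = E := by
    ext x
    rw [mem_graphSub]
    constructor
    · intro hx
      have hx2 : x = ((e.symm x.1 : E) : (Fin g → ℂ) × (Fin g → ℂ)) := by
        have h1 : ((e.symm x.1 : E) : (Fin g → ℂ) × (Fin g → ℂ)).1 = x.1 := by
          rw [← he (e.symm x.1)]; simp
        have h2 : ((e.symm x.1 : E) : (Fin g → ℂ) × (Fin g → ℂ)).2 = x.2 := by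
          rw [hx, hmv]; rfl
        exact Prod.ext h1.symm h2.symm
      rw [hx2]; exact (e.symm x.1).2
    · intro hx
      set y : E := ⟨x, hx⟩ with hy
      have h1 : e y = x.1 := he y
      have : T x.1 = x.2 := by
        rw [← h1, hT]
        simp only [LinearMap.comp_apply, LinearMap.coe_coe]
        rw [show ((e.symm : (Fin g → ℂ) →ₗ[ℂ] E) (e y)) = e.symm (e y) from rfl,
          LinearEquiv.symm_apply_apply]
        rfl
      rw [hmv, this]
  refine ⟨⟨W0, hgraph, fun W hW => graphSub_inj (hW.trans hgraph.symm)⟩, ?_⟩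
  intro W hW
  rw [Matrix.posDef_iff_dotProduct_mulVec]
  constructor
  · -- Hermitian
    unfold Matrix.IsHermitian
    simp [Matrix.conjTranspose_sub, Matrix.conjTranspose_mul]
  · intro x hx
    have hmem : (x, W.mulVec x) ∈ E := by
      rw [← hW, mem_graphSub]
    have hne : (x, W.mulVec x) ≠ 0 := fun h => hx (congrArg Prod.fst h)
    have hq := hpos _ hmem hne
    have key : dotProduct (star x) ((1 - Wᴴ * W).mulVec x) = qForm g (x, W.mulVec x) (x, W.mulVec x) := by
      have h1 : (1 - Wᴴ * W).mulVec x = x - Wᴴ.mulVec (W.mulVec x) := by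
        rw [Matrix.sub_mulVec, Matrix.one_mulVec, Matrix.mulVec_mulVec]
      rw [h1, dotProduct_sub]
      have h2 : dotProduct (star x) (Wᴴ.mulVec (W.mulVec x)) =
          dotProduct (star (W.mulVec x)) (W.mulVec x) := by
        rw [Matrix.dotProduct_mulVec, ← Matrix.star_mulVec]
      rw [h2, qForm]
      simp [dotProduct, Pi.star_apply, Complex.star_def]
    have him0 : ∀ u : Fin g → ℂ, (∑ i, (starRingEnd ℂ) (u i) * u i).im = 0 := by
      intro u
      rw [Complex.im_sum]
      apply Finset.sum_eq_zero
      intro i _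
      simp [Complex.mul_im]
      ring
    have him : (qForm g (x, W.mulVec x) (x, W.mulVec x)).im = 0 := by
      rw [qForm]
      simp [Complex.sub_im, him0]
    rw [key, Complex.lt_def]
    exact ⟨by simpa using hq, by simp [him]⟩
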